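/- Let A be a type, f : A → A a function, and t ∈ A an element with f(t) = t. Define the relation r on A by r(a, b) ⇔ b = f(a), and its symmetric closure r' by r'(a, b) ⇔ (b = f(a) ∨ a = f(b)). Then for every s ∈ A, the pair (s, t) lies in the reflexive transitive closure of r if and only if (s, t) lies in the reflexive transitive closure of r'. -/

import Mathlib

/-- For a function `f : A → A` and a fixed point `t` of `f`, `t` is reachable
from `s` under the relation `r a b ↔ b = f a` iff it is reachable under the
symmetric closure `r' a b ↔ (b = f a ∨ a = f b)`. -/
theorem stmt3 {A : Type} (f : A → A) (t : A) (ht : f t = t) (s : A) :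
    Relation.ReflTransGen (fun a b => b = f a) s t ↔
      Relation.ReflTransGen (fun a b => b = f a ∨ a = f b) s t := by
  constructor
  · exact fun h => Relation.ReflTransGen.mono (fun a b h => Or.inl h) _ _ h
  · intro h
    induction h using Relation.ReflTransGen.head_induction_on with
    | refl => exact Relation.ReflTransGen.refl
    | head hab _ ih =>
      rcases hab with hb | ha
      · exact Relation.ReflTransGen.head hb ih
      · rcases ih.cases_head with rfl | ⟨c, hc, hct⟩
        · subst ha; rw [ht]
        · subst ha hc; exact hct
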